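/- Let j be a positive half-integer. For every w ∈ ℂ ∪ {∞}, the coherent vector K(·,w) satisfies ⦀K(·,w)⦀_2 = 1 and its Wehrl entropy equals the conjectured minimal value: S_j(|K(·,w)|²) = 2j/(2j+1). -/

import Mathlib

open MeasureTheory

noncomputable section

/-- The normalized `p`-norm `⦀f⦀_p`, with `m = 2j`. -/
def nnorm (m : ℕ) (p : ℝ) (f : ℂ → ℂ) : ℝ :=
  ((p * ((m : ℝ) / 2) + 1) / Real.pi *
      ∫ z : ℂ, ‖f z‖ ^ p / (1 + ‖z‖ ^ 2) ^ 2) ^ (1 / p)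

/-- The coherent vector `K(·,w)` for `w ∈ ℂ ∪ {∞}` (with `none` encoding `∞`), `m = 2j`. -/
def coherent (m : ℕ) (w : Option ℂ) : ℂ → ℂ := fun z =>
  match w with
  | some w => (1 + z * (starRingEnd ℂ) w) ^ m *
      (((1 + ‖z‖ ^ 2) ^ (-(m : ℝ) / 2) : ℝ) : ℂ) *
      (((1 + ‖w‖ ^ 2) ^ (-(m : ℝ) / 2) : ℝ) : ℂ)
  | none => z ^ m * (((1 + ‖z‖ ^ 2) ^ (-(m : ℝ) / 2) : ℝ) : ℂ)

/-- The Wehrl entropy `S_j(|f|²)`, with `m = 2j`. -/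
def wehrl (m : ℕ) (f : ℂ → ℂ) : ℝ :=
  -(((m : ℝ) + 1) / Real.pi *
      ∫ z : ℂ, ‖f z‖ ^ 2 * Real.log (‖f z‖ ^ 2) /
        (1 + ‖z‖ ^ 2) ^ 2)

open Set Real Filter

lemma det_mulC (c : ℂ) :
    (ContinuousLinearMap.restrictScalars ℝ
      (ContinuousLinearMap.smulRight (1 : ℂ →L[ℂ] ℂ) c)).det = Complex.normSq c := by
  have h : ((ContinuousLinearMap.restrictScalars ℝ
      (ContinuousLinearMap.smulRight (1 : ℂ →L[ℂ] ℂ) c)) : ℂ →ₗ[ℝ] ℂ)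
      = Algebra.lmul ℝ ℂ c := by
    ext z; simp [mul_comm]
  rw [ContinuousLinearMap.det, h, ← Algebra.norm_apply, Algebra.norm_complex_apply]

lemma transfer_gen {f d : ℂ → ℂ} {s : Set ℂ} (hs : MeasurableSet s)
    (hsc : volume sᶜ = 0) (himg : volume ((f '' s)ᶜ) = 0) (hinj : Set.InjOn f s)
    (hder : ∀ z ∈ s, HasDerivAt f (d z) z)
    {G H : ℂ → ℝ} (hGH : ∀ z ∈ s, Complex.normSq (d z) * G (f z) = H z) :
    ∫ z : ℂ, G z = ∫ z : ℂ, H z := by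
  have h1 : ∫ z : ℂ, G z = ∫ z in f '' s, G z := by
    rw [setIntegral_congr_set (MeasureTheory.ae_eq_univ.2 himg), setIntegral_univ]
  have h2 : ∫ z in f '' s, G z = ∫ z in s, |(ContinuousLinearMap.restrictScalars ℝ
      (ContinuousLinearMap.smulRight (1 : ℂ →L[ℂ] ℂ) (d z))).det| • G (f z) := by
    exact integral_image_eq_integral_abs_det_fderiv_smul volume hs
      (fun z hz => ((hder z hz).hasFDerivAt.restrictScalars ℝ).hasFDerivWithinAt) hinj G
  have h3 : ∫ z in s, |(ContinuousLinearMap.restrictScalars ℝ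
      (ContinuousLinearMap.smulRight (1 : ℂ →L[ℂ] ℂ) (d z))).det| • G (f z)
      = ∫ z in s, H z := by
    refine setIntegral_congr_fun hs (fun z hz => ?_)
    rw [det_mulC, abs_of_nonneg (Complex.normSq_nonneg _), smul_eq_mul, hGH z hz]
  rw [h1, h2, h3, setIntegral_congr_set (MeasureTheory.ae_eq_univ.2 hsc), setIntegral_univ]

lemma radial (g : ℝ → ℝ) :
    ∫ z : ℂ, g (‖z‖) = (2 * π) * ∫ r in Ioi (0:ℝ), r * g r := by
  calc ∫ z : ℂ, g (‖z‖)
      = ∫ p in Ioi (0:ℝ) ×ˢ Ioo (-π) π, p.1 * g |p.1| := by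
        rw [← Complex.integral_comp_polarCoord_symm, polarCoord_target]
        simp_rw [Complex.norm_polarCoord_symm, smul_eq_mul]
    _ = (∫ r in Ioi (0:ℝ), r * g |r|) * ∫ _ in Ioo (-π) π, (1:ℝ) := by
        rw [← setIntegral_prod_mul, Measure.volume_eq_prod]
        simp_rw [mul_one]
    _ = (2 * π) * ∫ r in Ioi (0:ℝ), r * g r := by
        simp_rw [integral_const, measureReal_def, Measure.restrict_apply MeasurableSet.univ, Set.univ_inter,
          volume_Ioo, sub_neg_eq_add, ← two_mul,
          ENNReal.toReal_ofReal (by positivity : (0:ℝ) ≤ 2 * π), smul_eq_mul, mul_one]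
        rw [mul_comm]
        congr 1
        refine setIntegral_congr_fun measurableSet_Ioi (fun x hx => ?_)
        rw [abs_of_pos hx]

lemma aux_deriv_pow (n : ℕ) (hn : 1 ≤ n) (x : ℝ) :
    HasDerivAt (fun r : ℝ => -(1/(2*(n:ℝ))) * ((1+r^2)^n)⁻¹)
      (x * ((1+x^2)^(n+1))⁻¹) x := by
  have hpos : (0:ℝ) < 1 + x^2 := by positivity
  have h1 : HasDerivAt (fun r : ℝ => 1 + r^2) (2*x) x := by
    simpa using ((hasDerivAt_pow 2 x).const_add 1)
  have h2 := ((h1.fun_pow n).fun_inv (by positivity)).const_mul (-(1/(2*(n:ℝ))))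
  refine h2.congr_deriv ?_
  obtain ⟨k, hk⟩ : ∃ k, n = k + 1 := ⟨n-1, by omega⟩
  have hne : (1+x^2) ≠ 0 := ne_of_gt hpos
  rw [hk]
  simp only [Nat.add_sub_cancel]
  push_cast
  field_simp
  ring

lemma tendsto_u (n : ℕ) (hn : 1 ≤ n) :
    Tendsto (fun r : ℝ => (1+r^2)^n) atTop atTop := by
  apply Filter.Tendsto.comp (tendsto_pow_atTop (by omega))
  apply tendsto_atTop_add_const_left
  exact tendsto_pow_atTop (by omega)

lemma tendsto_inv_pow (n : ℕ) (hn : 1 ≤ n) :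
    Filter.Tendsto (fun r : ℝ => -(1/(2*(n:ℝ))) * ((1+r^2)^n)⁻¹) atTop (nhds 0) := by
  simpa using ((tendsto_u n hn).inv_tendsto_atTop).const_mul (-(1/(2*(n:ℝ))))

lemma R1 (n : ℕ) (hn : 1 ≤ n) :
    ∫ r in Ioi (0:ℝ), r * ((1+r^2)^(n+1))⁻¹ = 1/(2*(n:ℝ)) := by
  have := MeasureTheory.integral_Ioi_of_hasDerivAt_of_nonneg'
    (g := fun r : ℝ => -(1/(2*(n:ℝ))) * ((1+r^2)^n)⁻¹)
    (g' := fun x : ℝ => x * ((1+x^2)^(n+1))⁻¹)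
    (fun x _ => aux_deriv_pow n hn x)
    (fun x hx => by have hx0 : (0:ℝ) < x := hx; positivity) (tendsto_inv_pow n hn)
  rw [this]
  norm_num

lemma aux_deriv_log (n : ℕ) (hn : 1 ≤ n) (x : ℝ) :
    HasDerivAt (fun r : ℝ => -(1/2) * (((1+r^2)^n)⁻¹ * (Real.log (1+r^2)/n + 1/(n:ℝ)^2)))
      (x * (((1+x^2)^(n+1))⁻¹ * Real.log (1+x^2))) x := by
  have hpos : (0:ℝ) < 1 + x^2 := by positivity
  have h1 : HasDerivAt (fun r : ℝ => 1 + r^2) (2*x) x := by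
    simpa using ((hasDerivAt_pow 2 x).const_add 1)
  have h2 := (h1.fun_pow n).fun_inv (by positivity)
  have h3 : HasDerivAt (fun r : ℝ => Real.log (1+r^2)/n + 1/(n:ℝ)^2)
      ((2*x/(1+x^2))/n) x := ((h1.log (by positivity)).div_const _).add_const _
  have h4 := (h2.mul h3).const_mul (-(1/2 : ℝ))
  refine h4.congr_deriv ?_
  obtain ⟨k, hk⟩ : ∃ k, n = k + 1 := ⟨n-1, by omega⟩
  have hne : (1+x^2) ≠ 0 := ne_of_gt hpos
  rw [hk]
  have hkc : ((k:ℝ)+1) ≠ 0 := by positivity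
  simp only [Nat.add_sub_cancel]
  push_cast
  field_simp
  ring

lemma tendsto_log_term (n : ℕ) (hn : 1 ≤ n) :
    Tendsto (fun r : ℝ => ((1+r^2)^n)⁻¹ * Real.log (1+r^2)) atTop (nhds 0) := by
  have h0 : Tendsto (fun u : ℝ => Real.log u / u ^ (n:ℝ)) atTop (nhds 0) :=
    (isLittleO_log_rpow_atTop (by positivity : (0:ℝ) < n)).tendsto_div_nhds_zero
  have h1 : Tendsto (fun r : ℝ => 1 + r^2) atTop atTop :=
    tendsto_atTop_add_const_left _ _ (tendsto_pow_atTop (by omega))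
  have h2 := h0.comp h1
  have h3 : ∀ᶠ r : ℝ in atTop, Real.log (1+r^2) / (1+r^2) ^ (n:ℝ)
      = ((1+r^2)^n)⁻¹ * Real.log (1+r^2) := by
    filter_upwards [eventually_ge_atTop (0:ℝ)] with r hr
    rw [Real.rpow_natCast, div_eq_inv_mul]
  exact (h2.congr' h3)

lemma J1 (n : ℕ) (hn : 1 ≤ n) :
    ∫ r in Ioi (0:ℝ), r * (((1+r^2)^(n+1))⁻¹ * Real.log (1+r^2)) = 1/(2*(n:ℝ)^2) := by
  have hder : ∀ x ∈ Ici (0:ℝ), HasDerivAt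
      (fun r : ℝ => -(1/2) * (((1+r^2)^n)⁻¹ * (Real.log (1+r^2)/n + 1/(n:ℝ)^2)))
      (x * (((1+x^2)^(n+1))⁻¹ * Real.log (1+x^2))) x :=
    fun x _ => aux_deriv_log n hn x
  have hnonneg : ∀ x ∈ Ioi (0:ℝ), 0 ≤ x * (((1+x^2)^(n+1))⁻¹ * Real.log (1+x^2)) := by
    intro x hx
    have hx0 : (0:ℝ) < x := hx
    have : (0:ℝ) ≤ Real.log (1+x^2) := Real.log_nonneg (by nlinarith)
    positivity
  have hlim : Tendsto
      (fun r : ℝ => -(1/2) * (((1+r^2)^n)⁻¹ * (Real.log (1+r^2)/n + 1/(n:ℝ)^2)))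
      atTop (nhds 0) := by
    have h1 := tendsto_log_term n hn
    have h2 := (tendsto_u n hn).inv_tendsto_atTop
    have h3 : Tendsto (fun r : ℝ => ((1+r^2)^n)⁻¹ * (Real.log (1+r^2)/n + 1/(n:ℝ)^2))
        atTop (nhds 0) := by
      have := ((h1.div_const (n:ℝ)).add (h2.const_mul (1/(n:ℝ)^2)))
      simp only [zero_div, zero_add, mul_zero, add_zero] at this
      convert this using 2 with r
      simp only [Pi.inv_apply]
      ring
    simpa using h3.const_mul (-(1/2 : ℝ))
  have := MeasureTheory.integral_Ioi_of_hasDerivAt_of_nonneg' hder hnonneg hlim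
  rw [this]
  have hn0 : ((n:ℝ)) ≠ 0 := by positivity
  simp [Real.log_one]
  field_simp

lemma rpow_half_sq (m : ℕ) (x : ℝ) (hx : 0 < x) :
    (x ^ (-(m:ℝ)/2)) ^ 2 = (x ^ m)⁻¹ := by
  rw [← Real.rpow_natCast (x ^ (-(m:ℝ)/2)) 2, ← Real.rpow_mul hx.le]
  norm_num

lemma absK_some (m : ℕ) (w y : ℂ) :
    ‖coherent m (some w) y‖ ^ 2
      = Complex.normSq (1 + y * (starRingEnd ℂ) w) ^ m *
        ((1 + Complex.normSq y) ^ m)⁻¹ * ((1 + Complex.normSq w) ^ m)⁻¹ := by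
  have hy : (0:ℝ) < 1 + ‖y‖ ^ 2 := by positivity
  have hw : (0:ℝ) < 1 + ‖w‖ ^ 2 := by positivity
  simp only [coherent, norm_mul, norm_pow, Complex.norm_real, Real.norm_eq_abs]
  rw [abs_of_pos (Real.rpow_pos_of_pos hy _), abs_of_pos (Real.rpow_pos_of_pos hw _)]
  rw [mul_pow, mul_pow, rpow_half_sq m _ hy, rpow_half_sq m _ hw,
    ← pow_mul, mul_comm m 2, pow_mul, Complex.sq_norm, Complex.sq_norm, Complex.sq_norm]

lemma absK_none (m : ℕ) (y : ℂ) :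
    ‖coherent m none y‖ ^ 2
      = Complex.normSq y ^ m * ((1 + Complex.normSq y) ^ m)⁻¹ := by
  have hy : (0:ℝ) < 1 + ‖y‖ ^ 2 := by positivity
  simp only [coherent, norm_mul, norm_pow, Complex.norm_real, Real.norm_eq_abs]
  rw [abs_of_pos (Real.rpow_pos_of_pos hy _)]
  rw [mul_pow, rpow_half_sq m _ hy,
    ← pow_mul, mul_comm m 2, pow_mul]
  simp [Complex.sq_norm]

lemma transfer_some (m : ℕ) (w : ℂ) (g : ℝ → ℝ) :
    ∫ z : ℂ, g (‖coherent m (some w) z‖ ^ 2) / (1 + ‖z‖ ^ 2) ^ 2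
      = ∫ z : ℂ, g (((1 + ‖z‖ ^ 2) ^ m)⁻¹) / (1 + ‖z‖ ^ 2) ^ 2 := by
  set c : ℂ := (starRingEnd ℂ) w with hc
  set s : Set ℂ := {z | 1 - c * z ≠ 0} with hsdef
  set f : ℂ → ℂ := fun z => (z + w) / (1 - c * z) with hf
  set d : ℂ → ℂ := fun z => (1 + (Complex.normSq w : ℂ)) / (1 - c * z) ^ 2 with hd
  have hQR : (0:ℝ) < 1 + Complex.normSq w :=
    add_pos_of_pos_of_nonneg one_pos (Complex.normSq_nonneg w)
  have hQc : (1 : ℂ) + (Complex.normSq w : ℂ) ≠ 0 := by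
    rw [show (1 : ℂ) + (Complex.normSq w : ℂ) = ((1 + Complex.normSq w : ℝ) : ℂ) by push_cast; ring]
    exact_mod_cast hQR.ne'
  have hs : MeasurableSet s := by
    have : s = (fun z : ℂ => 1 - c * z) ⁻¹' ({0}ᶜ) := rfl
    rw [this]
    exact ((continuous_const.sub (continuous_const.mul continuous_id)).measurable)
      (measurableSet_singleton 0).compl
  have hsub : ∀ (a : ℂ), Set.Subsingleton {z : ℂ | 1 + a * z = 0} := by
    intro a z₁ hz₁ z₂ hz₂
    simp only [Set.mem_setOf_eq] at hz₁ hz₂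
    have ha : a ≠ 0 := by
      intro h; rw [h] at hz₁; simpa using hz₁
    have : a * z₁ = a * z₂ := by linear_combination hz₁ - hz₂
    exact mul_left_cancel₀ ha this
  have hsc : volume sᶜ = 0 := by
    have : sᶜ = {z : ℂ | 1 + (-c) * z = 0} := by
      ext z
      simp only [Set.mem_compl_iff, hsdef, Set.mem_setOf_eq, not_not, neg_mul,
        ← sub_eq_add_neg]
    rw [this]
    exact Set.Subsingleton.measure_zero (hsub (-c)) _
  have himg : volume ((f '' s)ᶜ) = 0 := by
    refine measure_mono_null (s := _) (t := {y : ℂ | 1 + c * y = 0}) ?_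
      (Set.Subsingleton.measure_zero (hsub c) _)
    intro y hy
    simp only [Set.mem_compl_iff, Set.mem_image, not_exists] at hy
    by_contra hny
    simp only [Set.mem_setOf_eq] at hny
    have hvy : (1 : ℂ) + c * y ≠ 0 := hny
    set z : ℂ := (y - w) / (1 + c * y) with hz
    have hu : 1 - c * z = (1 + (Complex.normSq w : ℂ)) / (1 + c * y) := by
      rw [hz]; field_simp; linear_combination Complex.mul_conj w
    have hzs : z ∈ s := by
      simp only [hsdef, Set.mem_setOf_eq, hu]
      exact div_ne_zero hQc hvy
    refine hy z ⟨hzs, ?_⟩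
    rw [hf]
    simp only
    rw [hu, hz]
    have hvy' : (1:ℂ) + y * c ≠ 0 := by rwa [mul_comm]
    field_simp
    linear_combination y * Complex.mul_conj w
  have hinj : Set.InjOn f s := by
    intro z₁ h₁ z₂ h₂ heq
    simp only [hsdef, Set.mem_setOf_eq] at h₁ h₂
    simp only [hf] at heq
    rw [div_eq_div_iff h₁ h₂] at heq
    have : (1 + (Complex.normSq w : ℂ)) * z₁ = (1 + (Complex.normSq w : ℂ)) * z₂ := by
      linear_combination heq + (z₂ - z₁) * Complex.mul_conj w
    exact mul_left_cancel₀ hQc this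
  have hder : ∀ z ∈ s, HasDerivAt f (d z) z := by
    intro z hz
    simp only [hsdef, Set.mem_setOf_eq] at hz
    have h1 : HasDerivAt (fun z : ℂ => z + w) 1 z := (hasDerivAt_id z).add_const w
    have h2 : HasDerivAt (fun z : ℂ => 1 - c * z) (-c) z := by
      simpa using ((hasDerivAt_id z).const_mul c).const_sub 1
    have := h1.fun_div h2 hz
    refine this.congr_deriv ?_
    rw [hd]
    simp only
    rw [div_eq_div_iff (pow_ne_zero 2 hz) (pow_ne_zero 2 hz)]
    ring_nf
    linear_combination (1 - c*z)^2 * Complex.mul_conj w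
  refine transfer_gen hs hsc himg hinj hder ?_
  intro z hz
  simp only [hsdef, Set.mem_setOf_eq] at hz
  have hA : 0 < Complex.normSq (1 - c * z) := Complex.normSq_pos.2 hz
  have hP : (0:ℝ) < 1 + Complex.normSq z :=
    add_pos_of_pos_of_nonneg one_pos (Complex.normSq_nonneg z)
  set A := Complex.normSq (1 - c * z) with hAdef
  set P := 1 + Complex.normSq z with hPdef
  set Q := 1 + Complex.normSq w with hQdef
  have hB : A + Complex.normSq (z + w) = P * Q := by
    simp only [hAdef, hPdef, hQdef, Complex.normSq_apply, Complex.sub_re, Complex.sub_im,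
      Complex.add_re, Complex.add_im, Complex.mul_re, Complex.mul_im, Complex.one_re,
      Complex.one_im, hc, RCLike.star_def, Complex.conj_re, Complex.conj_im]
    ring
  have hfz1 : 1 + Complex.normSq (f z) = P * Q / A := by
    rw [hf]
    simp only
    rw [map_div₀ Complex.normSq]
    rw [← hAdef]
    field_simp
    linear_combination hB
  have hQsq : Complex.normSq (1 + (Complex.normSq w : ℂ)) = Q ^ 2 := by
    rw [show (1:ℂ) + (Complex.normSq w : ℂ) = ((Q : ℝ) : ℂ) by rw [hQdef]; push_cast; ring,
      Complex.normSq_ofReal, sq]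
  have hKA : Complex.normSq (1 + f z * c) * A = Q ^ 2 := by
    rw [← map_mul Complex.normSq, show (1 + f z * c) * (1 - c * z) = 1 + (Complex.normSq w : ℂ)
      from by rw [hf]; have hz' : (1:ℂ) - z * c ≠ 0 := (by rwa [mul_comm]); field_simp; linear_combination Complex.mul_conj w, hQsq]
  have hKf : Complex.normSq (1 + f z * c) = Q ^ 2 / A := by
    field_simp at hKA ⊢
    linarith [hKA]
  have hdz : Complex.normSq (d z) = Q ^ 2 / A ^ 2 := by
    rw [hd]
    simp only
    rw [map_div₀ Complex.normSq, hQsq, map_pow, ← hAdef]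
  have harg : (Q^2/A)^m * ((P*Q/A)^m)⁻¹ * (Q^m)⁻¹ = ((P:ℝ)^m)⁻¹ := by
    have hQ0 : Q ≠ 0 := hQR.ne'
    have hA0 : A ≠ 0 := hA.ne'
    have hP0 : P ≠ 0 := hP.ne'
    rw [div_pow, div_pow, mul_pow]
    field_simp
    rw [← pow_mul, mul_comm 2 m, pow_mul]
  rw [absK_some m w (f z), ← hQdef, hKf, hfz1, harg, hdz]
  simp only [Complex.sq_norm, ← hPdef, hfz1]
  have hQ0 : Q ≠ 0 := hQR.ne'
  have hA0 : A ≠ 0 := hA.ne'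
  have hP0 : P ≠ 0 := hP.ne'
  field_simp


lemma transfer_none (m : ℕ) (g : ℝ → ℝ) :
    ∫ z : ℂ, g (‖coherent m none z‖ ^ 2) / (1 + ‖z‖ ^ 2) ^ 2
      = ∫ z : ℂ, g (((1 + ‖z‖ ^ 2) ^ m)⁻¹) / (1 + ‖z‖ ^ 2) ^ 2 := by
  set s : Set ℂ := {z | z ≠ 0} with hsdef
  have hs : MeasurableSet s := (measurableSet_singleton (0:ℂ)).compl
  have hsc : volume sᶜ = 0 := by
    have : sᶜ = {(0:ℂ)} := by ext z; simp [hsdef]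
    rw [this]; exact measure_singleton 0
  have himg : volume (((fun z : ℂ => z⁻¹) '' s)ᶜ) = 0 := by
    refine measure_mono_null (t := {(0:ℂ)}) ?_ (measure_singleton 0)
    intro y hy
    simp only [Set.mem_compl_iff, Set.mem_image, not_exists] at hy
    by_contra hy0
    simp only [Set.mem_singleton_iff] at hy0
    exact hy y⁻¹ ⟨by simpa [hsdef] using hy0, by simp⟩
  have hder : ∀ z ∈ s, HasDerivAt (fun z : ℂ => z⁻¹) (-((z:ℂ)^2)⁻¹) z :=
    fun z hz => hasDerivAt_inv hz
  refine transfer_gen hs hsc himg (fun z₁ _ z₂ _ h => inv_injective h) hder ?_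
  intro z hz
  simp only [hsdef, Set.mem_setOf_eq] at hz
  have hn : 0 < Complex.normSq z := Complex.normSq_pos.2 hz
  have hP : (0:ℝ) < 1 + Complex.normSq z :=
    add_pos_of_pos_of_nonneg one_pos (Complex.normSq_nonneg z)
  rw [absK_none m z⁻¹]
  have h1 : Complex.normSq (z⁻¹) = (Complex.normSq z)⁻¹ := map_inv₀ Complex.normSq z
  have h2 : Complex.normSq (-((z:ℂ)^2)⁻¹) = ((Complex.normSq z)^2)⁻¹ := by
    rw [Complex.normSq_neg, map_inv₀, map_pow]
  simp only [Complex.sq_norm, h1, h2]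
  have harg : (Complex.normSq z)⁻¹ ^ m * ((1 + (Complex.normSq z)⁻¹) ^ m)⁻¹
      = ((1 + Complex.normSq z) ^ m)⁻¹ := by
    rw [show (1 + (Complex.normSq z)⁻¹) = (1 + Complex.normSq z) / Complex.normSq z by
      field_simp; ring, div_pow]
    field_simp
    try ring
    rw [← mul_pow, mul_inv_cancel₀ hn.ne', one_pow]
  rw [harg]
  have hmeas : ((Complex.normSq z)^2)⁻¹ * (g (((1 + Complex.normSq z) ^ m)⁻¹)
      / (1 + (Complex.normSq z)⁻¹) ^ 2) = g (((1 + Complex.normSq z) ^ m)⁻¹)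
      / (1 + Complex.normSq z) ^ 2 := by
    rw [show (1 + (Complex.normSq z)⁻¹) = (1 + Complex.normSq z) / Complex.normSq z by
      field_simp; ring, div_pow]
    field_simp
    try ring
  rw [hmeas]

/-- Coherent vectors are normalized and achieve the conjectured minimal Wehrl entropy:
`⦀K(·,w)⦀_2 = 1` and `S_j(|K(·,w)|²) = 2j/(2j+1)`. -/
theorem stmt7 (m : ℕ) (hm : 1 ≤ m) (w : Option ℂ) :
    nnorm m 2 (coherent m w) = 1 ∧
      wehrl m (coherent m w) = (m : ℝ) / ((m : ℝ) + 1) := by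
  have hπ : Real.pi ≠ 0 := Real.pi_ne_zero
  have hm1 : ((m:ℝ) + 1) ≠ 0 := by positivity
  -- the two transfers, uniform in `w`
  have htrans : ∀ g : ℝ → ℝ,
      ∫ z : ℂ, g (‖coherent m w z‖ ^ 2) / (1 + ‖z‖ ^ 2) ^ 2
        = ∫ z : ℂ, g (((1 + ‖z‖ ^ 2) ^ m)⁻¹) / (1 + ‖z‖ ^ 2) ^ 2 := by
    intro g
    cases w with
    | none => exact transfer_none m g
    | some w => exact transfer_some m w g
  -- radial computation of the common RHS
  have hrad : ∀ g : ℝ → ℝ,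
      ∫ z : ℂ, g (((1 + ‖z‖ ^ 2) ^ m)⁻¹) / (1 + ‖z‖ ^ 2) ^ 2
        = (2 * Real.pi) * ∫ r in Ioi (0:ℝ), r * (g (((1+r^2)^m)⁻¹) / (1+r^2)^2) :=
    fun g => radial (fun t => g (((1+t^2)^m)⁻¹) / (1+t^2)^2)
  constructor
  · -- norm
    have hint : ∫ z : ℂ, ‖coherent m w z‖ ^ (2:ℝ) / (1 + ‖z‖ ^ 2) ^ 2
        = Real.pi / ((m:ℝ)+1) := by
      have e1 : ∀ z : ℂ, ‖coherent m w z‖ ^ (2:ℝ)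
          = ‖coherent m w z‖ ^ (2:ℕ) := by
        intro z
        rw [show (2:ℝ) = ((2:ℕ):ℝ) by norm_num, Real.rpow_natCast]
      simp_rw [e1]
      rw [htrans (fun t => t), hrad (fun t => t)]
      have e2 : ∀ r : ℝ, r * ((((1+r^2)^m)⁻¹) / (1+r^2)^2) = r * ((1+r^2)^(m+1+1))⁻¹ := by
        intro r
        have h0 : (0:ℝ) < 1+r^2 := by positivity
        rw [show m+1+1 = m+2 by ring, pow_add, mul_inv, div_eq_mul_inv]
        try ring
      simp_rw [e2]
      rw [R1 (m+1) (by omega)]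
      push_cast
      field_simp
      try ring
    rw [nnorm, hint]
    rw [show (2 * ((m:ℝ)/2) + 1) / Real.pi * (Real.pi / ((m:ℝ)+1)) = 1 by field_simp; try ring]
    norm_num
  · -- entropy
    have hint : ∫ z : ℂ, ‖coherent m w z‖ ^ 2 *
          Real.log (‖coherent m w z‖ ^ 2) / (1 + ‖z‖ ^ 2) ^ 2
        = -(Real.pi * m / ((m:ℝ)+1)^2) := by
      rw [show (fun z : ℂ => ‖coherent m w z‖ ^ 2 *
          Real.log (‖coherent m w z‖ ^ 2) / (1 + ‖z‖ ^ 2) ^ 2)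
        = (fun z : ℂ => (fun t => t * Real.log t) (‖coherent m w z‖ ^ 2)
            / (1 + ‖z‖ ^ 2) ^ 2) from rfl]
      rw [htrans (fun t => t * Real.log t), hrad (fun t => t * Real.log t)]
      have e2 : ∀ r : ℝ, r * ((((1+r^2)^m)⁻¹ * Real.log (((1+r^2)^m)⁻¹)) / (1+r^2)^2)
          = (-(m:ℝ)) * (r * (((1+r^2)^(m+1+1))⁻¹ * Real.log (1+r^2))) := by
        intro r
        have h0 : (0:ℝ) < 1+r^2 := by positivity
        rw [Real.log_inv, Real.log_pow, show m+1+1 = m+2 by ring, pow_add, mul_inv,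
          div_eq_mul_inv]
        push_cast
        ring
      simp_rw [e2]
      rw [integral_const_mul, J1 (m+1) (by omega)]
      push_cast
      field_simp
    rw [wehrl, hint]
    field_simp
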